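/- Let B = {x ∈ ℓ²(ℕ, ℝ) : ‖x‖ < 1} be the open unit ball of ℓ²(ℕ, ℝ). Then for every x ∈ B the series ∑ᵢ xᵢ²/(1 − xᵢ²) is summable, and the function G : B → ℝ defined by G(x) = exp(−∑ᵢ xᵢ²/(1 − xᵢ²)) (the value of the infinite product ∏ᵢ exp(−xᵢ²/(1 − xᵢ²))) is continuous on B. -/

import Mathlib

open scoped ENNReal


/-- The infinite product `G = ∏ᵢ exp(−xᵢ²/(1−xᵢ²))` of the paper's Example 1.1,
with value `exp(−∑ᵢ xᵢ²/(1−xᵢ²))`. -/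
noncomputable def Gprod (x : lp (fun _ : ℕ => ℝ) 2) : ℝ :=
  Real.exp (-∑' i : ℕ, ((x : ∀ _ : ℕ, ℝ) i) ^ 2 / (1 - ((x : ∀ _ : ℕ, ℝ) i) ^ 2))

private lemma sq_summable (x : lp (fun _ : ℕ => ℝ) 2) :
    Summable (fun i : ℕ => ((x : ∀ _ : ℕ, ℝ) i) ^ 2) := by
  have h := lp.hasSum_norm (by norm_num : (0:ℝ) < (2:ℝ≥0∞).toReal) x
  have hs := h.summable
  have : (fun i : ℕ => ‖(x : ∀ _ : ℕ, ℝ) i‖ ^ (2:ℝ≥0∞).toReal)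
      = fun i : ℕ => ((x : ∀ _ : ℕ, ℝ) i) ^ 2 := by
    funext i
    rw [show (2:ℝ≥0∞).toReal = ((2:ℕ):ℝ) by norm_num, Real.rpow_natCast]
    simp [sq_abs]
  rwa [this] at hs

private lemma apply_le (x : lp (fun _ : ℕ => ℝ) 2) (i : ℕ) :
    |(x : ∀ _ : ℕ, ℝ) i| ≤ ‖x‖ :=
  lp.norm_apply_le_norm (by norm_num) x i

private lemma sq_apply_le (x : lp (fun _ : ℕ => ℝ) 2) (i : ℕ) :
    ((x : ∀ _ : ℕ, ℝ) i) ^ 2 ≤ ‖x‖ ^ 2 := by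
  have := apply_le x i
  nlinarith [abs_nonneg ((x : ∀ _ : ℕ, ℝ) i), sq_abs ((x : ∀ _ : ℕ, ℝ) i)]

private lemma summable_term (x : lp (fun _ : ℕ => ℝ) 2) (hx : ‖x‖ < 1) :
    Summable (fun i : ℕ => ((x : ∀ _ : ℕ, ℝ) i) ^ 2 / (1 - ((x : ∀ _ : ℕ, ℝ) i) ^ 2)) := by
  have hpos : ∀ i, 0 < 1 - ((x : ∀ _ : ℕ, ℝ) i) ^ 2 := by
    intro i
    have h1 := sq_apply_le x i
    nlinarith [norm_nonneg x]
  refine Summable.of_nonneg_of_le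
    (fun i => div_nonneg (sq_nonneg _) (hpos i).le)
    (fun i => ?_) ((sq_summable x).div_const (1 - ‖x‖ ^ 2))
  have h1 := sq_apply_le x i
  have h2 : 0 < 1 - ‖x‖ ^ 2 := by nlinarith [norm_nonneg x]
  exact div_le_div_of_nonneg_left (sq_nonneg _) h2 (by linarith)

private noncomputable def Fsum (x : lp (fun _ : ℕ => ℝ) 2) : ℝ :=
  ∑' i : ℕ, ((x : ∀ _ : ℕ, ℝ) i) ^ 2 / (1 - ((x : ∀ _ : ℕ, ℝ) i) ^ 2)

private lemma conj22 : ((2:ℝ≥0∞).toReal).HolderConjugate ((2:ℝ≥0∞).toReal) := by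
  have h : (2:ℝ≥0∞).toReal = 2 := by simp
  rw [h]
  exact ⟨by norm_num, by norm_num, by norm_num⟩

/-- Lipschitz estimate on the ball of radius `r`. -/
private lemma Fsum_lip {r : ℝ} (hr : r < 1) (x y : lp (fun _ : ℕ => ℝ) 2)
    (hx : ‖x‖ ≤ r) (hy : ‖y‖ ≤ r) :
    |Fsum x - Fsum y| ≤ 2 / (1 - r ^ 2) ^ 2 * ‖x - y‖ := by
  have hr0 : 0 ≤ r := le_trans (norm_nonneg x) hx
  have hr2 : 0 < 1 - r ^ 2 := by nlinarith
  have hx1 : ‖x‖ < 1 := lt_of_le_of_lt hx hr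
  have hy1 : ‖y‖ < 1 := lt_of_le_of_lt hy hr
  have hsx := summable_term x hx1
  have hsy := summable_term y hy1
  set tx : ℕ → ℝ := fun i => ((x : ∀ _ : ℕ, ℝ) i) ^ 2 / (1 - ((x : ∀ _ : ℕ, ℝ) i) ^ 2)
  set ty : ℕ → ℝ := fun i => ((y : ∀ _ : ℕ, ℝ) i) ^ 2 / (1 - ((y : ∀ _ : ℕ, ℝ) i) ^ 2)
  have hsub : Fsum x - Fsum y = ∑' i, (tx i - ty i) := (Summable.tsum_sub hsx hsy).symm
  have hposx : ∀ i, 0 < 1 - ((x : ∀ _ : ℕ, ℝ) i) ^ 2 := fun i => by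
    have h1 := sq_apply_le x i
    nlinarith [norm_nonneg x, sq_nonneg (1 - ‖x‖)]
  have hposy : ∀ i, 0 < 1 - ((y : ∀ _ : ℕ, ℝ) i) ^ 2 := fun i => by
    have h1 := sq_apply_le y i
    nlinarith [norm_nonneg y, sq_nonneg (1 - ‖y‖)]
  have hbound : ∀ i, |tx i - ty i|
      ≤ ‖((x - y : lp (fun _ : ℕ => ℝ) 2) : ∀ _ : ℕ, ℝ) i‖ *
        ‖((x + y : lp (fun _ : ℕ => ℝ) 2) : ∀ _ : ℕ, ℝ) i‖ / (1 - r ^ 2) ^ 2 := by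
    intro i
    have hxi := hposx i
    have hyi := hposy i
    have hxr : ((x : ∀ _ : ℕ, ℝ) i) ^ 2 ≤ r ^ 2 := (sq_apply_le x i).trans (by nlinarith [norm_nonneg x])
    have hyr : ((y : ∀ _ : ℕ, ℝ) i) ^ 2 ≤ r ^ 2 := (sq_apply_le y i).trans (by nlinarith [norm_nonneg y])
    have heq : tx i - ty i = (((x : ∀ _ : ℕ, ℝ) i) ^ 2 - ((y : ∀ _ : ℕ, ℝ) i) ^ 2) /
        ((1 - ((x : ∀ _ : ℕ, ℝ) i) ^ 2) * (1 - ((y : ∀ _ : ℕ, ℝ) i) ^ 2)) := by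
      simp only [tx, ty]; rw [div_sub_div _ _ hxi.ne' hyi.ne']
      ring
    rw [heq, abs_div]
    have habs : |(1 - ((x : ∀ _ : ℕ, ℝ) i) ^ 2) * (1 - ((y : ∀ _ : ℕ, ℝ) i) ^ 2)|
        = (1 - ((x : ∀ _ : ℕ, ℝ) i) ^ 2) * (1 - ((y : ∀ _ : ℕ, ℝ) i) ^ 2) :=
      abs_of_pos (mul_pos hxi hyi)
    rw [habs]
    have hnum : |((x : ∀ _ : ℕ, ℝ) i) ^ 2 - ((y : ∀ _ : ℕ, ℝ) i) ^ 2|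
        = ‖((x - y : lp (fun _ : ℕ => ℝ) 2) : ∀ _ : ℕ, ℝ) i‖ *
          ‖((x + y : lp (fun _ : ℕ => ℝ) 2) : ∀ _ : ℕ, ℝ) i‖ := by
      simp only [lp.coeFn_sub, lp.coeFn_add, Pi.sub_apply, Pi.add_apply, Real.norm_eq_abs,
        ← abs_mul]
      ring_nf
    rw [hnum]
    have hden : (1 - r ^ 2) ^ 2 ≤ (1 - ((x : ∀ _ : ℕ, ℝ) i) ^ 2) * (1 - ((y : ∀ _ : ℕ, ℝ) i) ^ 2) := by
      nlinarith
    exact div_le_div_of_nonneg_left (mul_nonneg (norm_nonneg _) (norm_nonneg _))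
      (by positivity) hden
  have hsummul : Summable fun i =>
      ‖((x - y : lp (fun _ : ℕ => ℝ) 2) : ∀ _ : ℕ, ℝ) i‖ *
      ‖((x + y : lp (fun _ : ℕ => ℝ) 2) : ∀ _ : ℕ, ℝ) i‖ :=
    lp.summable_mul conj22 (x - y) (x + y)
  calc |Fsum x - Fsum y| = |∑' i, (tx i - ty i)| := by rw [hsub]
    _ ≤ ∑' i, |tx i - ty i| := by
        simpa [Real.norm_eq_abs] using norm_tsum_le_tsum_norm (f := fun i => tx i - ty i)
          (by simpa [Real.norm_eq_abs] using (hsx.sub hsy).abs)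
    _ ≤ ∑' i, ‖((x - y : lp (fun _ : ℕ => ℝ) 2) : ∀ _ : ℕ, ℝ) i‖ *
          ‖((x + y : lp (fun _ : ℕ => ℝ) 2) : ∀ _ : ℕ, ℝ) i‖ / (1 - r ^ 2) ^ 2 := by
        refine Summable.tsum_le_tsum hbound ((hsx.sub hsy).abs) (hsummul.div_const _)
    _ = (∑' i, ‖((x - y : lp (fun _ : ℕ => ℝ) 2) : ∀ _ : ℕ, ℝ) i‖ *
          ‖((x + y : lp (fun _ : ℕ => ℝ) 2) : ∀ _ : ℕ, ℝ) i‖) / (1 - r ^ 2) ^ 2 := by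
        rw [tsum_div_const]
    _ ≤ ‖x - y‖ * ‖x + y‖ / (1 - r ^ 2) ^ 2 := by
        exact (div_le_div_iff_of_pos_right (by positivity)).mpr
          (lp.tsum_mul_le_mul_norm' conj22 (x - y) (x + y))
    _ ≤ 2 / (1 - r ^ 2) ^ 2 * ‖x - y‖ := by
        have h2 : ‖x + y‖ ≤ 2 := by
          calc ‖x + y‖ ≤ ‖x‖ + ‖y‖ := norm_add_le _ _
            _ ≤ 2 := by linarith
        rw [div_mul_eq_mul_div]
        apply (div_le_div_iff_of_pos_right (by positivity)).mpr
        nlinarith [norm_nonneg (x - y), norm_nonneg (x + y)]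

/-- Example 1.1 (1): on the open unit ball of `ℓ²(ℕ, ℝ)` the series
`∑ᵢ xᵢ²/(1−xᵢ²)` is summable and the infinite product `G` is continuous. -/
theorem infinite_product_G_continuous :
    (∀ x : lp (fun _ : ℕ => ℝ) 2, ‖x‖ < 1 →
      Summable (fun i : ℕ => ((x : ∀ _ : ℕ, ℝ) i) ^ 2 / (1 - ((x : ∀ _ : ℕ, ℝ) i) ^ 2))) ∧
    ContinuousOn Gprod {x : lp (fun _ : ℕ => ℝ) 2 | ‖x‖ < 1} := by
  refine ⟨fun x hx => summable_term x hx, ?_⟩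
  have hF : ContinuousOn Fsum {x : lp (fun _ : ℕ => ℝ) 2 | ‖x‖ < 1} := by
    intro x₀ hx₀
    simp only [Set.mem_setOf_eq] at hx₀
    set r : ℝ := (‖x₀‖ + 1) / 2 with hr_def
    have hr1 : r < 1 := by rw [hr_def]; linarith
    have hx₀r : ‖x₀‖ < r := by rw [hr_def]; linarith
    have hU : IsOpen {x : lp (fun _ : ℕ => ℝ) 2 | ‖x‖ < r} := by
      have : {x : lp (fun _ : ℕ => ℝ) 2 | ‖x‖ < r} = Metric.ball 0 r := by
        ext z; simp [Metric.mem_ball, dist_zero_right]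
      rw [this]; exact Metric.isOpen_ball
    have hlip : LipschitzOnWith (Real.toNNReal (2 / (1 - r ^ 2) ^ 2)) Fsum
        {x : lp (fun _ : ℕ => ℝ) 2 | ‖x‖ < r} := by
      apply LipschitzOnWith.of_dist_le_mul
      intro a ha b hb
      simp only [Set.mem_setOf_eq] at ha hb
      have hr2 : 0 < 1 - r ^ 2 := by
        have : 0 ≤ ‖x₀‖ := norm_nonneg _
        have : 0 ≤ r := by rw [hr_def]; linarith
        nlinarith
      rw [Real.dist_eq, dist_eq_norm]
      have : (Real.toNNReal (2 / (1 - r ^ 2) ^ 2) : ℝ) = 2 / (1 - r ^ 2) ^ 2 :=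
        Real.coe_toNNReal _ (by positivity)
      rw [this]
      exact Fsum_lip hr1 a b ha.le hb.le
    have hcont : ContinuousAt Fsum x₀ := by
      have := (hlip.continuousOn).continuousAt (hU.mem_nhds hx₀r)
      exact this
    exact hcont.continuousWithinAt
  have : Gprod = fun x => Real.exp (-Fsum x) := rfl
  rw [this]
  exact (Real.continuous_exp.comp continuous_neg).comp_continuousOn hF
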